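/- If an n-dimensional simplex in ℝⁿ is f-fat (its inradius-to-circumradius ratio is at least f), then there exists f' > 0 depending only on f and n such that every k-dimensional face of the simplex, for 2 ≤ k ≤ n−1, is f'-fat. -/

import Mathlib

open Metric EuclideanGeometry
open scoped RealInnerProductSpace

noncomputable section

abbrev E (n : ℕ) := EuclideanSpace ℝ (Fin n)

/-- The inradius of a set: radius of the largest closed ball, relative to the affine span
of the set (a `k`-ball for a `k`-dimensional set), contained in the set. -/
def inradius {n : ℕ} (s : Set (E n)) : ℝ :=
  sSup {r : ℝ | 0 ≤ r ∧ ∃ c ∈ affineSpan ℝ s, closedBall c r ∩ (affineSpan ℝ s : Set (E n)) ⊆ s}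

/-- The circumradius of a set: radius of the smallest closed ball containing it. -/
def circumradius {n : ℕ} (s : Set (E n)) : ℝ :=
  sInf {r : ℝ | 0 ≤ r ∧ ∃ c, s ⊆ closedBall c r}

/-- A simplex is `f`-fat if its inradius-to-circumradius ratio is at least `f`. -/
def Fat {n m : ℕ} (f : ℝ) (s : Affine.Simplex ℝ (E n) m) : Prop :=
  f ≤ inradius (convexHull ℝ (Set.range s.points)) / circumradius (convexHull ℝ (Set.range s.points))

lemma inner_slab {n m : ℕ} (pts : Fin (m+1) → E n) (i : Fin (m+1))
    (B : AffineSubspace ℝ (E n)) [Nonempty B] [Submodule.HasOrthogonalProjection B.direction]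
    (hB : ∀ j, j ≠ i → pts j ∈ B)
    {x : E n} (hx : x ∈ convexHull ℝ (Set.range pts)) :
    0 ≤ ⟪x -ᵥ (orthogonalProjection B (pts i) : E n), pts i -ᵥ orthogonalProjection B (pts i)⟫ ∧
      ⟪x -ᵥ (orthogonalProjection B (pts i) : E n), pts i -ᵥ orthogonalProjection B (pts i)⟫
        ≤ ‖pts i -ᵥ (orthogonalProjection B (pts i) : E n)‖^2 := by
  set q : E n := ↑(orthogonalProjection B (pts i)) with hq
  set v : E n := pts i -ᵥ q with hv
  have hvmem : v ∈ B.directionᗮ := vsub_orthogonalProjection_mem_direction_orthogonal B (pts i)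
  rw [convexHull_range_eq_exists_affineCombination] at hx
  obtain ⟨s, w, hw0, hw1, rfl⟩ := hx
  have hcomb := Finset.affineCombination_eq_weightedVSubOfPoint_vadd_of_sum_eq_one s w pts hw1 q
  have hxq : s.affineCombination ℝ pts w -ᵥ q = s.weightedVSubOfPoint pts q w := by
    rw [hcomb]; simp
  rw [hxq, Finset.weightedVSubOfPoint_apply, sum_inner]
  have hterm : ∀ j ∈ s, ⟪w j • (pts j -ᵥ q), v⟫ = if j = i then w j * ‖v‖^2 else 0 := by
    intro j hj
    by_cases hji : j = i
    · subst hji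
      rw [if_pos rfl, real_inner_smul_left, ← hv, real_inner_self_eq_norm_sq]
    · have hmem : pts j -ᵥ q ∈ B.direction :=
        AffineSubspace.vsub_mem_direction (hB j hji) (orthogonalProjection_mem _)
      have : ⟪pts j -ᵥ q, v⟫ = 0 := hvmem (pts j -ᵥ q) hmem
      rw [real_inner_smul_left, this, mul_zero, if_neg hji]
  rw [Finset.sum_congr rfl hterm, Finset.sum_ite_eq' s i (fun j => w j * ‖v‖^2)]
  by_cases his : i ∈ s
  · rw [if_pos his]
    have h1 : w i ≤ 1 := hw1 ▸ Finset.single_le_sum hw0 his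
    exact ⟨mul_nonneg (hw0 i his) (sq_nonneg _), by nlinarith [sq_nonneg ‖v‖]⟩
  · rw [if_neg his]
    exact ⟨le_refl 0, sq_nonneg _⟩

lemma altitude_ge {n m : ℕ} (pts : Fin (m+1) → E n) (i : Fin (m+1))
    (B : AffineSubspace ℝ (E n)) [Nonempty B] [Submodule.HasOrthogonalProjection B.direction]
    (hB : ∀ j, j ≠ i → pts j ∈ B) (hBle : B ≤ affineSpan ℝ (Set.range pts))
    (hvi : pts i ∉ B) {c : E n} {r : ℝ}
    (hc : c ∈ affineSpan ℝ (Set.range pts)) (hr : 0 ≤ r)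
    (hball : closedBall c r ∩ (affineSpan ℝ (Set.range pts) : Set (E n))
      ⊆ convexHull ℝ (Set.range pts)) :
    2*r ≤ dist (pts i) (orthogonalProjection B (pts i)) := by
  set q : E n := ↑(orthogonalProjection B (pts i)) with hq
  set v : E n := pts i -ᵥ q with hv
  have hdist : dist (pts i) q = ‖v‖ := by rw [dist_eq_norm_vsub (E n)]
  have hqB : q ∈ B := orthogonalProjection_mem _
  have hne : v ≠ 0 := by
    intro h0
    exact hvi (by rwa [show pts i = q from eq_of_vsub_eq_zero h0])
  have hpos : (0:ℝ) < ‖v‖ := norm_pos_iff.mpr hne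
  set ν : E n := ‖v‖⁻¹ • v with hν
  have hνnorm : ‖ν‖ = 1 := by
    rw [hν, norm_smul, norm_inv, norm_norm, inv_mul_cancel₀ hpos.ne']
  have hvdir : v ∈ (affineSpan ℝ (Set.range pts)).direction :=
    AffineSubspace.vsub_mem_direction
      (mem_affineSpan ℝ (Set.mem_range_self i)) (hBle hqB)
  have hmem : ∀ t : ℝ, |t| ≤ r → (t • ν +ᵥ c) ∈ convexHull ℝ (Set.range pts) := by
    intro t ht
    apply hball
    constructor
    · simp only [mem_closedBall]
      rw [dist_eq_norm_vsub (E n), vadd_vsub, norm_smul, hνnorm, mul_one]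
      exact ht
    · exact AffineSubspace.vadd_mem_of_mem_direction
        (Submodule.smul_mem _ _ (Submodule.smul_mem _ _ hvdir)) hc
  have key : ∀ t : ℝ, |t| ≤ r →
      0 ≤ t * ‖v‖ + ⟪c -ᵥ q, v⟫ ∧ t * ‖v‖ + ⟪c -ᵥ q, v⟫ ≤ ‖v‖^2 := by
    intro t ht
    have hs := inner_slab pts i B hB (hmem t ht)
    rw [← hq, ← hv] at hs
    have hrw : ⟪(t • ν +ᵥ c) -ᵥ q, v⟫ = t * ‖v‖ + ⟪c -ᵥ q, v⟫ := by
      rw [vadd_vsub_assoc, inner_add_left, real_inner_smul_left, hν,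
        real_inner_smul_left, real_inner_self_eq_norm_sq]
      field_simp
    rwa [hrw] at hs
  have h1 := (key r (by rw [abs_of_nonneg hr])).2
  have h2 := (key (-r) (by rw [abs_neg, abs_of_nonneg hr])).1
  rw [hdist]
  nlinarith [sq_nonneg ‖v‖]

lemma inball_of_altitudes {n k : ℕ} (hk : 0 < k) (pts : Fin (k+1) → E n)
    (hind : AffineIndependent ℝ pts) {b : ℝ} (hb : 0 < b)
    (halt : ∀ i, ∀ y ∈ affineSpan ℝ (pts '' {i}ᶜ), b ≤ dist (pts i) y) :
    ∃ c ∈ affineSpan ℝ (Set.range pts),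
      closedBall c (b/(k+1)) ∩ (affineSpan ℝ (Set.range pts) : Set (E n))
        ⊆ convexHull ℝ (Set.range pts) := by
  classical
  set u : Fin (k+1) → ℝ := fun _ => ((k:ℝ)+1)⁻¹ with hu
  have hksucc : ((k:ℝ)+1) ≠ 0 := by positivity
  have husum : ∑ j : Fin (k+1), u j = 1 := by
    simp [hu, Finset.card_univ]
    field_simp
  set c : E n := Finset.univ.affineCombination ℝ pts u with hc
  refine ⟨c, affineCombination_mem_affineSpan husum pts, ?_⟩
  rintro x ⟨hx1, hx2⟩
  obtain ⟨w, hw1, rfl⟩ := eq_affineCombination_of_mem_affineSpan_of_fintype hx2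
  set x : E n := Finset.univ.affineCombination ℝ pts w with hx
  have hxc : x -ᵥ c = Finset.univ.weightedVSub pts (w - u) := by
    rw [hx, hc]
    exact Finset.affineCombination_vsub _ _ _ _
  have hdistxc : ‖x -ᵥ c‖ ≤ b/(k+1) := by
    rw [← dist_eq_norm_vsub (E n)]
    exact mem_closedBall.mp hx1
  have hwnn : ∀ i, 0 ≤ w i := by
    intro i
    set B : AffineSubspace ℝ (E n) := affineSpan ℝ (pts '' {i}ᶜ) with hB
    have hnt : Nontrivial (Fin (k+1)) := Fin.nontrivial_iff_two_le.mpr (by omega)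
    obtain ⟨j, hj⟩ := exists_ne i
    haveI : Nonempty B := ⟨⟨pts j, subset_affineSpan ℝ _ ⟨j, hj, rfl⟩⟩⟩
    set q : E n := ↑(orthogonalProjection B (pts i)) with hq
    set v : E n := pts i -ᵥ q with hv
    have hbv : b ≤ ‖v‖ := by
      rw [hv, ← dist_eq_norm_vsub (E n)]
      exact halt i q (orthogonalProjection_mem _)
    have hvmem : v ∈ B.directionᗮ :=
      vsub_orthogonalProjection_mem_direction_orthogonal B (pts i)
    have hsum0 : ∑ j : Fin (k+1), (w - u) j = 0 := by
      simp [Pi.sub_apply, Finset.sum_sub_distrib, hw1, husum]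
    have hinner : ⟪x -ᵥ c, v⟫ = (w i - u i) * ‖v‖^2 := by
      rw [hxc, Finset.weightedVSub_eq_weightedVSubOfPoint_of_sum_eq_zero _ _ _ hsum0 q,
        Finset.weightedVSubOfPoint_apply, sum_inner]
      rw [Finset.sum_eq_single i]
      · rw [real_inner_smul_left, ← hv, real_inner_self_eq_norm_sq, Pi.sub_apply]
      · intro j' _ hj'
        have hmem : pts j' -ᵥ q ∈ B.direction :=
          AffineSubspace.vsub_mem_direction (subset_affineSpan ℝ _ ⟨j', hj', rfl⟩)
            (orthogonalProjection_mem _)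
        rw [real_inner_smul_left, hvmem (pts j' -ᵥ q) hmem, mul_zero]
      · intro h; exact absurd (Finset.mem_univ i) h
    have habs : |⟪x -ᵥ c, v⟫| ≤ (b/(k+1)) * ‖v‖ :=
      le_trans (abs_real_inner_le_norm _ _)
        (mul_le_mul_of_nonneg_right hdistxc (norm_nonneg _))
    have hlow : -((b/(k+1)) * ‖v‖) ≤ (w i - u i) * ‖v‖^2 := by
      rw [← hinner]; exact (abs_le.mp habs).1
    have hui : u i = ((k:ℝ)+1)⁻¹ := rfl
    have hvpos : 0 < ‖v‖ := lt_of_lt_of_le hb hbv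
    have hK : (0:ℝ) < (k:ℝ)+1 := by positivity
    have h1 : b / ((k:ℝ)+1) * ‖v‖ ≤ ‖v‖ / ((k:ℝ)+1) * ‖v‖ := by gcongr
    have h2 : -(‖v‖ / ((k:ℝ)+1) * ‖v‖) ≤ (w i - u i) * ‖v‖^2 :=
      le_trans (neg_le_neg h1) hlow
    rw [hui] at h2
    have h3 : ‖v‖ / ((k:ℝ)+1) * ‖v‖ = ((k:ℝ)+1)⁻¹ * ‖v‖^2 := by
      field_simp
    rw [h3] at h2
    nlinarith [mul_pos hvpos hvpos]
  exact affineCombination_mem_convexHull (fun i _ => hwnn i) hw1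

lemma circum_mem_nonempty {n : ℕ} {X : Set (E n)} (hX : Bornology.IsBounded X) :
    {r : ℝ | 0 ≤ r ∧ ∃ c, X ⊆ closedBall c r}.Nonempty := by
  obtain ⟨r, hr⟩ := hX.subset_closedBall 0
  exact ⟨max r 0, le_max_right _ _, 0,
    hr.trans (closedBall_subset_closedBall (le_max_left _ _))⟩

lemma circum_pos {n : ℕ} {X : Set (E n)} (hX : Bornology.IsBounded X) {p q : E n}
    (hp : p ∈ X) (hq : q ∈ X) (hpq : p ≠ q) : 0 < circumradius X := by
  have hne := circum_mem_nonempty hX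
  have hle : dist p q / 2 ≤ circumradius X := by
    apply le_csInf hne
    rintro r ⟨hr0, c, hc⟩
    have h1 : dist p c ≤ r := hc hp
    have h2 : dist q c ≤ r := hc hq
    have := dist_triangle p c q
    rw [dist_comm c q] at this
    linarith
  have : 0 < dist p q := dist_pos.mpr hpq
  linarith

lemma circum_mono {n : ℕ} {X Y : Set (E n)} (hXY : X ⊆ Y) (hY : Bornology.IsBounded Y) :
    circumradius X ≤ circumradius Y := by
  apply csInf_le_csInf ⟨0, fun r hr => hr.1⟩ (circum_mem_nonempty hY)
  rintro r ⟨hr0, c, hc⟩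
  exact ⟨hr0, c, hXY.trans hc⟩

lemma inradius_bddAbove {n : ℕ} {X : Set (E n)} (hX : Bornology.IsBounded X) {v : E n}
    (hv : v ≠ 0) (hvdir : v ∈ (affineSpan ℝ X).direction) :
    BddAbove {r : ℝ | 0 ≤ r ∧ ∃ c ∈ affineSpan ℝ X,
      closedBall c r ∩ (affineSpan ℝ X : Set (E n)) ⊆ X} := by
  obtain ⟨M, hM⟩ := Metric.isBounded_iff.mp hX
  refine ⟨M, ?_⟩
  rintro r ⟨hr0, c, hcspan, hsub⟩
  have hcX : c ∈ X := hsub ⟨mem_closedBall_self hr0, hcspan⟩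
  have hvnorm : (0:ℝ) < ‖v‖ := norm_pos_iff.mpr hv
  set x : E n := (r/‖v‖) • v +ᵥ c with hx
  have hxX : x ∈ X := by
    apply hsub
    constructor
    · simp only [mem_closedBall, hx]
      rw [dist_eq_norm_vsub (E n), vadd_vsub, norm_smul, norm_div, Real.norm_eq_abs,
        abs_of_nonneg hr0, norm_norm, div_mul_cancel₀ _ hvnorm.ne']
    · exact AffineSubspace.vadd_mem_of_mem_direction (Submodule.smul_mem _ _ hvdir) hcspan
  have : dist x c = r := by
    rw [dist_eq_norm_vsub (E n), hx, vadd_vsub, norm_smul, norm_div, Real.norm_eq_abs,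
      abs_of_nonneg hr0, norm_norm, div_mul_cancel₀ _ hvnorm.ne']
  linarith [hM hxX hcX]


/-- If an `n`-simplex in `ℝⁿ` is `f`-fat then there is `f' > 0`, depending only on `f` and `n`,
such that every `k`-dimensional face, `2 ≤ k ≤ n - 1`, is `f'`-fat. -/
theorem fat_simplex_faces_fat (n : ℕ) (f : ℝ) (hf : 0 < f) :
    ∃ f' > 0, ∀ s : Affine.Simplex ℝ (E n) n, Fat f s →
      ∀ k : ℕ, 2 ≤ k → k ≤ n - 1 →
        ∀ (fs : Finset (Fin (n + 1))) (h : fs.card = k + 1), Fat f' (s.face h) := by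
  refine ⟨f / (n+1), by positivity, ?_⟩
  intro s hFat k hk2 hkn fs hcard
  have hn3 : 3 ≤ n := by omega
  set P := s.points with hP
  set Fp := (s.face hcard).points with hFp
  set hullT := convexHull ℝ (Set.range P) with hhT
  set hullF := convexHull ℝ (Set.range Fp) with hhF
  have hspanT : affineSpan ℝ hullT = affineSpan ℝ (Set.range P) := affineSpan_convexHull _
  have hspanF : affineSpan ℝ hullF = affineSpan ℝ (Set.range Fp) := affineSpan_convexHull _
  have hbT : Bornology.IsBounded hullT := ((Set.finite_range P).isCompact_convexHull ℝ).isBounded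
  have hbF : Bornology.IsBounded hullF := ((Set.finite_range Fp).isCompact_convexHull ℝ).isBounded
  have hFsub : Set.range Fp ⊆ Set.range P := by
    rw [hFp, Affine.Simplex.face_points']
    exact Set.range_comp_subset_range _ _
  have hFT : hullF ⊆ hullT := convexHull_mono hFsub
  have hinjT : Function.Injective P := s.independent.injective
  have hinjF : Function.Injective Fp := (s.face hcard).independent.injective
  have h01n : (0 : Fin (n+1)) ≠ 1 := by
    intro h
    have h2 := congrArg Fin.val h
    rw [Fin.val_zero, Fin.val_one', Nat.mod_eq_of_lt (by omega)] at h2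
    exact absurd h2 (by omega)
  have h01k : (0 : Fin (k+1)) ≠ 1 := by
    intro h
    have h2 := congrArg Fin.val h
    rw [Fin.val_zero, Fin.val_one', Nat.mod_eq_of_lt (by omega)] at h2
    exact absurd h2 (by omega)
  -- circumradius of the big simplex is positive
  have hRpos : 0 < circumradius hullT :=
    circum_pos hbT (subset_convexHull ℝ _ (Set.mem_range_self 0))
      (subset_convexHull ℝ _ (Set.mem_range_self 1)) (fun h => h01n (hinjT h))
  set R := circumradius hullT with hR
  have hFat' : f ≤ inradius hullT / R := hFat
  have hfR : f * R ≤ inradius hullT := (le_div_iff₀ hRpos).mp hFat'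
  have hfRpos : 0 < f * R := mul_pos hf hRpos
  -- extract a near-optimal inball of the big simplex
  have hST : inradius hullT = sSup {r : ℝ | 0 ≤ r ∧ ∃ c ∈ affineSpan ℝ (Set.range P),
      closedBall c r ∩ (affineSpan ℝ (Set.range P) : Set (E n)) ⊆ hullT} := by
    rw [inradius, hspanT]
  have hSTne : {r : ℝ | 0 ≤ r ∧ ∃ c ∈ affineSpan ℝ (Set.range P),
      closedBall c r ∩ (affineSpan ℝ (Set.range P) : Set (E n)) ⊆ hullT}.Nonempty := by
    refine ⟨0, le_refl 0, P 0, subset_affineSpan ℝ _ (Set.mem_range_self 0), ?_⟩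
    rintro x ⟨hx1, -⟩
    have : x = P 0 := by
      have := mem_closedBall.mp hx1
      have := dist_nonneg (x := x) (y := P 0)
      have : dist x (P 0) = 0 := le_antisymm (by linarith) (by linarith)
      exact dist_eq_zero.mp this
    rw [this]
    exact subset_convexHull ℝ _ (Set.mem_range_self 0)
  have hlt : f * R / 2 < sSup {r : ℝ | 0 ≤ r ∧ ∃ c ∈ affineSpan ℝ (Set.range P),
      closedBall c r ∩ (affineSpan ℝ (Set.range P) : Set (E n)) ⊆ hullT} := by
    rw [← hST]; linarith
  obtain ⟨r₀, hr₀mem, hr₀gt⟩ := exists_lt_of_lt_csSup hSTne hlt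
  obtain ⟨hr₀0, c₀, hc₀, hball₀⟩ := hr₀mem
  have hr₀pos : 0 < r₀ := lt_of_le_of_lt (by positivity) hr₀gt
  -- altitudes of the face are at least 2 r₀
  haveI : Nontrivial (Fin (n+1)) := Fin.nontrivial_iff_two_le.mpr (by omega)
  have halt : ∀ i : Fin (k+1), ∀ y ∈ affineSpan ℝ (Fp '' {i}ᶜ), 2*r₀ ≤ dist (Fp i) y := by
    intro i y hy
    set ι : Fin (n+1) := fs.orderEmbOfFin hcard i with hι
    have hFpi : Fp i = P ι := rfl
    set A : AffineSubspace ℝ (E n) := affineSpan ℝ (P '' {ι}ᶜ) with hA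
    obtain ⟨j₀, hj₀⟩ := exists_ne ι
    haveI : Nonempty A := ⟨⟨P j₀, subset_affineSpan ℝ _ ⟨j₀, hj₀, rfl⟩⟩⟩
    have hyA : y ∈ A := by
      refine affineSpan_mono ℝ ?_ hy
      rintro z ⟨j, hj, rfl⟩
      exact ⟨fs.orderEmbOfFin hcard j, fun hc =>
        hj ((fs.orderEmbOfFin hcard).injective hc), rfl⟩
    have hBmem : ∀ j, j ≠ ι → P j ∈ A := fun j hj =>
      subset_affineSpan ℝ _ ⟨j, hj, rfl⟩
    have hBle : A ≤ affineSpan ℝ (Set.range P) :=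
      affineSpan_mono ℝ (Set.image_subset_range _ _)
    have hnotmem : P ι ∉ A := by
      have := s.independent.notMem_affineSpan_diff ι Set.univ
      rwa [← Set.compl_eq_univ_diff] at this
    have halt1 : 2*r₀ ≤ dist (P ι) (orthogonalProjection A (P ι)) :=
      altitude_ge P ι A hBmem hBle hnotmem hc₀ hr₀0 hball₀
    have h2 := dist_sq_eq_dist_orthogonalProjection_sq_add_dist_orthogonalProjection_sq
      (s := A) (P ι) hyA
    rw [hFpi, dist_comm (P ι) y]
    nlinarith [dist_nonneg (x := y) (y := P ι),
      dist_nonneg (x := P ι) (y := (orthogonalProjection A (P ι) : E n)),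
      dist_nonneg (x := y) (y := (orthogonalProjection A (P ι) : E n))]
  -- inscribed ball of the face
  obtain ⟨cF, hcF, hballF⟩ := inball_of_altitudes (by omega) Fp
    (s.face hcard).independent (by positivity : (0:ℝ) < 2*r₀) halt
  -- face inradius lower bound
  have hSF : inradius hullF = sSup {r : ℝ | 0 ≤ r ∧ ∃ c ∈ affineSpan ℝ (Set.range Fp),
      closedBall c r ∩ (affineSpan ℝ (Set.range Fp) : Set (E n)) ⊆ hullF} := by
    rw [inradius, hspanF]
  have hvne : Fp 1 -ᵥ Fp 0 ≠ 0 :=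
    vsub_ne_zero.mpr (fun h => h01k (hinjF h).symm)
  have hvdir : Fp 1 -ᵥ Fp 0 ∈ (affineSpan ℝ hullF).direction := by
    rw [hspanF]
    exact AffineSubspace.vsub_mem_direction
      (subset_affineSpan ℝ _ (Set.mem_range_self 1))
      (subset_affineSpan ℝ _ (Set.mem_range_self 0))
  have hbdd := inradius_bddAbove hbF hvne hvdir
  rw [hspanF] at hbdd
  have hρmem : 2*r₀/(k+1) ∈ {r : ℝ | 0 ≤ r ∧ ∃ c ∈ affineSpan ℝ (Set.range Fp),
      closedBall c r ∩ (affineSpan ℝ (Set.range Fp) : Set (E n)) ⊆ hullF} :=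
    ⟨by positivity, cF, hcF, hballF⟩
  have hinF : 2*r₀/(k+1) ≤ inradius hullF := by
    rw [hSF]
    exact le_csSup hbdd hρmem
  -- face circumradius bounds
  have hcFpos : 0 < circumradius hullF :=
    circum_pos hbF (subset_convexHull ℝ _ (Set.mem_range_self 0))
      (subset_convexHull ℝ _ (Set.mem_range_self 1)) (fun h => h01k (hinjF h))
  have hcFle : circumradius hullF ≤ R := circum_mono hFT hbT
  -- conclude
  show f/(n+1) ≤ inradius hullF / circumradius hullF
  have hk1n : (k:ℝ)+1 ≤ (n:ℝ)+1 := by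
    exact_mod_cast (by omega : k + 1 ≤ n + 1)
  have hstep : f * R / ((n:ℝ)+1) ≤ 2*r₀/((k:ℝ)+1) := by
    have h1 : f * R / ((n:ℝ)+1) ≤ f * R / ((k:ℝ)+1) := by
      gcongr
    have h2 : f * R / ((k:ℝ)+1) ≤ 2*r₀/((k:ℝ)+1) :=
      (div_le_div_iff_of_pos_right (by positivity)).mpr (by linarith)
    linarith
  have hinF0 : 0 ≤ inradius hullF := le_trans (by positivity) hinF
  have hfinal : f/((n:ℝ)+1) = (f * R / ((n:ℝ)+1)) / R := by
    field_simp
  rw [hfinal]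
  exact div_le_div₀ hinF0 (le_trans hstep hinF) hcFpos hcFle
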